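/- Let A be a finite dimensional G-graded division algebra over a field k such that Cen(A_e) = A_e ∩ Cen(A). Then A is graded symmetric. -/

import Mathlib

open Module

open LinearMap

section Aux
open LinearMap
open scoped TensorProduct

-- helper: nonzero vector admits endo sending it anywhere, and a functional =1
section helpers_aux
variable {Z V : Type*} [Field Z] [AddCommGroup V] [Module Z V]

lemma exists_endo_map {v : V} (hv : v ≠ 0) (w : V) : ∃ f : V →ₗ[Z] V, f v = w := by
  obtain ⟨q, hq⟩ := Submodule.exists_isCompl (Submodule.span Z {v})
  refine ⟨(LinearMap.toSpanSingleton Z V w) ∘ₗ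
    ((LinearEquiv.toSpanNonzeroSingleton Z V v hv).symm : Submodule.span Z {v} →ₗ[Z] Z) ∘ₗ
    (Submodule.linearProjOfIsCompl _ q hq), ?_⟩
  have h1 : Submodule.linearProjOfIsCompl _ q hq v
      = ⟨v, Submodule.mem_span_singleton_self v⟩ :=
    Submodule.linearProjOfIsCompl_apply_left hq ⟨v, Submodule.mem_span_singleton_self v⟩
  have h2 : (LinearEquiv.toSpanNonzeroSingleton Z V v hv).symm
      ⟨v, Submodule.mem_span_singleton_self v⟩ = 1 := by
    rw [LinearEquiv.symm_apply_eq]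
    ext
    simp [LinearEquiv.toSpanNonzeroSingleton]
  simp [h1, h2]

lemma exists_functional {v : V} (hv : v ≠ 0) : ∃ φ : V →ₗ[Z] Z, φ v = 1 := by
  obtain ⟨q, hq⟩ := Submodule.exists_isCompl (Submodule.span Z {v})
  refine ⟨((LinearEquiv.toSpanNonzeroSingleton Z V v hv).symm : Submodule.span Z {v} →ₗ[Z] Z)
    ∘ₗ (Submodule.linearProjOfIsCompl _ q hq), ?_⟩
  have h1 : Submodule.linearProjOfIsCompl _ q hq v
      = ⟨v, Submodule.mem_span_singleton_self v⟩ :=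
    Submodule.linearProjOfIsCompl_apply_left hq ⟨v, Submodule.mem_span_singleton_self v⟩
  have h2 : (LinearEquiv.toSpanNonzeroSingleton Z V v hv).symm
      ⟨v, Submodule.mem_span_singleton_self v⟩ = 1 := by
    rw [LinearEquiv.symm_apply_eq]
    ext
    simp [LinearEquiv.toSpanNonzeroSingleton]
  simp [h1, h2]
end helpers_aux

section inner
variable {Z V : Type*} [Field Z] [AddCommGroup V] [Module Z V]
  [FiniteDimensional Z V] [Nontrivial V]

/-- every `Z`-algebra automorphism of `End Z V` is inner. -/
lemma algEquiv_end_exists_conj (Θ : Module.End Z V ≃ₐ[Z] Module.End Z V) :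
    ∃ T : V ≃ₗ[Z] V, ∀ e : Module.End Z V, Θ e = (T : V →ₗ[Z] V) ∘ₗ e ∘ₗ (T.symm : V →ₗ[Z] V) := by
  have hn : 0 < finrank Z V := finrank_pos
  set b := Module.finBasis Z V with hb
  have hι : Nonempty (Fin (finrank Z V)) := ⟨⟨0, hn⟩⟩
  obtain ⟨i₀⟩ := hι
  set v₀ := b i₀ with hv₀
  set φ := b.coord i₀ with hφ
  have hφv₀ : φ v₀ = 1 := by simp [hφ, hv₀]
  -- rank one maps
  set g : V → Module.End Z V := fun v => φ.smulRight v with hg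
  have hgval : ∀ v w, g v w = φ w • v := fun v w => rfl
  have hkey : ∀ (f : Module.End Z V) (v : V), f * g v = g (f v) := by
    intro f v; ext w; simp [hgval, mul_apply, map_smul]
  set e := g v₀ with he
  have hee : e * e = e := by
    ext w; simp [he, hgval, mul_apply, hφv₀, smul_smul]
  have hene : Θ e ≠ 0 := by
    intro h0
    have : e = 0 := by
      have := Θ.injective (h0.trans (map_zero Θ).symm)
      exact this
    have : e v₀ = 0 := by rw [this]; rfl
    rw [he, hgval, hφv₀, one_smul] at this
    exact (b.ne_zero i₀) this
  obtain ⟨w₀, hw₀⟩ : ∃ w₀, Θ e w₀ ≠ 0 := by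
    by_contra h; push_neg at h; exact hene (LinearMap.ext fun w => h w)
  set u₀ := Θ e w₀ with hu₀
  have hu₀ne : u₀ ≠ 0 := hw₀
  have heu₀ : Θ e u₀ = u₀ := by
    rw [hu₀, ← Module.End.mul_apply, ← map_mul, hee]
  -- the intertwiner
  set T : V →ₗ[Z] V :=
    { toFun := fun v => Θ (g v) u₀
      map_add' := by
        intro v v'
        have h : g (v + v') = g v + g v' := by
          ext w; show φ w • (v + v') = φ w • v + φ w • v'; rw [smul_add]
        show Θ (g (v + v')) u₀ = Θ (g v) u₀ + Θ (g v') u₀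
        rw [h, map_add]; rfl
      map_smul' := by
        intro z v
        have h : g (z • v) = z • g v := by
          ext w
          show φ w • (z • v) = z • (φ w • v)
          exact smul_comm _ _ _
        show Θ (g (z • v)) u₀ = z • Θ (g v) u₀
        rw [h, map_smul]; rfl } with hT
  have hTval : ∀ v, T v = Θ (g v) u₀ := fun v => rfl
  have hTint : ∀ (f : Module.End Z V) (v : V), T (f v) = Θ f (T v) := by
    intro f v
    rw [hTval, hTval, ← hkey, map_mul, Module.End.mul_apply]
  have hTv₀ : T v₀ = u₀ := by rw [hTval, ← he, heu₀]
  have hTinj : Function.Injective T := by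
    rw [← LinearMap.ker_eq_bot]
    rw [Submodule.eq_bot_iff]
    intro v hv
    by_contra hvne
    obtain ⟨f, hf⟩ := exists_endo_map (Z := Z) hvne v₀
    have : T v₀ = 0 := by
      rw [← hf, hTint, (LinearMap.mem_ker.mp hv), map_zero]
    rw [hTv₀] at this
    exact hu₀ne this
  set Te := LinearEquiv.ofBijective T ⟨hTinj, LinearMap.injective_iff_surjective.mp hTinj⟩ with hTe
  refine ⟨Te, fun f => ?_⟩
  ext w
  have h1 : (Te : V →ₗ[Z] V) (Te.symm w) = w := Te.apply_symm_apply w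
  have h2 : (Te : V →ₗ[Z] V) = T := rfl
  have h1' : T (Te.symm w) = w := h1
  simp only [coe_comp, Function.comp_apply, h2]
  rw [hTint]
  exact congrArg (Θ f) h1'.symm
end inner

section rel
variable {Z D : Type*} [Field Z] [DivisionRing D] [Algebra Z D]
variable {ι : Type*} [DecidableEq ι]

lemma rel_indep
    (hcentral : ∀ d : D, (∀ x : D, x * d = d * x) → ∃ z : Z, algebraMap Z D z = d)
    (n : ℕ) : ∀ (s : Finset ι), s.card = n → ∀ (a c : ι → D),
    (∀ f : ι → Z, ∑ i ∈ s, f i • c i = 0 → ∀ i ∈ s, f i = 0) →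
    ∑ i ∈ s, (mulLeft Z (a i) * mulRight Z (c i)) = 0 → ∀ i ∈ s, a i = 0 := by
  induction n using Nat.strong_induction_on with
  | _ n ih =>
    intro s hcard a c hc hrel
    by_contra hcon
    push_neg at hcon
    obtain ⟨i₀, hi₀s, hi₀⟩ := hcon
    set a' : ι → D := fun i => (a i₀)⁻¹ * a i with ha'
    have ha'i₀ : a' i₀ = 1 := inv_mul_cancel₀ hi₀
    have hrel' : ∑ i ∈ s, (mulLeft Z (a' i) * mulRight Z (c i)) = 0 := by
      have h : ∑ i ∈ s, (mulLeft Z (a' i) * mulRight Z (c i))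
          = mulLeft Z (a i₀)⁻¹ * ∑ i ∈ s, (mulLeft Z (a i) * mulRight Z (c i)) := by
        rw [Finset.mul_sum]
        refine Finset.sum_congr rfl fun i _ => ?_
        ext w
        show (a i₀)⁻¹ * a i * (w * c i) = (a i₀)⁻¹ * (a i * (w * c i))
        rw [mul_assoc]
      rw [h, hrel, mul_zero]
    -- commutator step
    have hcomm : ∀ d : D,
        ∑ i ∈ s.erase i₀, (mulLeft Z (d * a' i - a' i * d) * mulRight Z (c i)) = 0 := by
      intro d
      have h1 : ∑ i ∈ s, (mulLeft Z (d * a' i - a' i * d) * mulRight Z (c i)) = 0 := by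
        have e1 : ∀ i, mulLeft Z (d * a' i - a' i * d) * mulRight Z (c i)
            = mulLeft Z d * (mulLeft Z (a' i) * mulRight Z (c i))
              - (mulLeft Z (a' i) * mulRight Z (c i)) * mulLeft Z d := by
          intro i
          ext w
          show (d * a' i - a' i * d) * (w * c i)
            = d * (a' i * (w * c i)) - a' i * (d * w * c i)
          simp [ha', sub_mul, mul_assoc]
        simp only [e1]
        rw [Finset.sum_sub_distrib, ← Finset.mul_sum, ← Finset.sum_mul, hrel', mul_zero,
          zero_mul, sub_zero]
      have h2 : mulLeft Z (d * a' i₀ - a' i₀ * d) * mulRight Z (c i₀) = 0 := by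
        rw [ha'i₀, mul_one, one_mul, sub_self]
        ext w; simp
      rw [← Finset.add_sum_erase _ _ hi₀s, h2, zero_add] at h1
      exact h1
    -- independence restricted to the erased set
    have hcerase : ∀ f : ι → Z, ∑ i ∈ s.erase i₀, f i • c i = 0 → ∀ i ∈ s.erase i₀, f i = 0 := by
      intro f hf i hi
      have hsum : ∑ j ∈ s, (Function.update f i₀ 0) j • c j = 0 := by
        rw [← Finset.add_sum_erase _ _ hi₀s, Function.update_self, zero_smul, zero_add, ← hf]
        refine Finset.sum_congr rfl fun j hj => ?_
        rw [Function.update_of_ne (Finset.ne_of_mem_erase hj)]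
      have h := hc _ hsum i (Finset.mem_of_mem_erase hi)
      rwa [Function.update_of_ne (Finset.ne_of_mem_erase hi)] at h
    have hcentral' : ∀ i ∈ s.erase i₀, ∃ z : Z, algebraMap Z D z = a' i := by
      intro i hi
      refine hcentral (a' i) fun x => ?_
      have h0 := ih (s.erase i₀).card
        (by rw [← hcard]; exact Finset.card_erase_lt_of_mem hi₀s)
        (s.erase i₀) rfl (fun j => x * a' j - a' j * x) c hcerase (hcomm x) i hi
      exact sub_eq_zero.mp h0
    choose! z hz using hcentral'
    have h3 : ∀ i ∈ s.erase i₀,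
        mulLeft Z (a' i) * mulRight Z (c i) = mulRight Z (z i • c i) := by
      intro i hi
      ext w
      show a' i * (w * c i) = w * (z i • c i)
      rw [← hz i hi, Algebra.smul_def, ← mul_assoc, ← mul_assoc, ← Algebra.commutes (z i) w]
    have h4 : mulRight Z (c i₀ + ∑ i ∈ s.erase i₀, z i • c i)
        = ∑ i ∈ s, (mulLeft Z (a' i) * mulRight Z (c i)) := by
      rw [← Finset.add_sum_erase _ _ hi₀s, ha'i₀, Finset.sum_congr rfl h3]
      ext w
      show w * (c i₀ + ∑ i ∈ s.erase i₀, z i • c i)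
        = (1 : D) * (w * c i₀) + (∑ i ∈ s.erase i₀, mulRight Z (z i • c i)) w
      rw [one_mul, LinearMap.sum_apply, mul_add, Finset.mul_sum]
      rfl
    have hfin : c i₀ + ∑ i ∈ s.erase i₀, z i • c i = 0 := by
      have h5 := h4.trans hrel'
      have := congrArg (fun (f : Module.End Z D) => f 1) h5
      simpa using this
    have hzero := hc (Function.update z i₀ 1) ?_ i₀ hi₀s
    · rw [Function.update_self] at hzero
      exact one_ne_zero hzero
    · rw [← Finset.add_sum_erase _ _ hi₀s, Function.update_self, one_smul]
      rw [← hfin]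
      congr 1
      refine Finset.sum_congr rfl fun j hj => ?_
      rw [Function.update_of_ne (Finset.ne_of_mem_erase hj)]
end rel

section tensor
variable (Z D : Type*) [Field Z] [DivisionRing D] [Algebra Z D]

/-- right multiplication as an algebra hom from the opposite algebra. -/
def rmulAlg : Dᵐᵒᵖ →ₐ[Z] Module.End Z D where
  toFun y := mulRight Z y.unop
  map_one' := by ext w; show w * 1 = w; rw [mul_one]
  map_mul' y₁ y₂ := by
    ext w
    show w * (y₂.unop * y₁.unop) = (w * y₂.unop) * y₁.unop
    rw [mul_assoc]
  map_zero' := by ext w; show w * 0 = 0; rw [mul_zero]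
  map_add' y₁ y₂ := by
    ext w
    show w * (y₁.unop + y₂.unop) = w * y₁.unop + w * y₂.unop
    rw [mul_add]
  commutes' r := by
    ext w
    show w * (algebraMap Z D r) = r • w
    rw [Algebra.smul_def, Algebra.commutes]

lemma rmulAlg_apply (y : Dᵐᵒᵖ) : rmulAlg Z D y = mulRight Z y.unop := rfl

lemma lmul_commute_rmul (x : D) (y : Dᵐᵒᵖ) :
    Commute ((Algebra.lmul Z D) x) (rmulAlg Z D y) := by
  ext w
  show x * (w * y.unop) = (x * w) * y.unop
  rw [mul_assoc]

/-- the canonical map `D ⊗ Dᵐᵒᵖ → End Z D`. -/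
noncomputable def LRmap : D ⊗[Z] Dᵐᵒᵖ →ₐ[Z] Module.End Z D :=
  Algebra.TensorProduct.lift (Algebra.lmul Z D) (rmulAlg Z D) (lmul_commute_rmul Z D)

/-- the σ-twisted canonical map. -/
noncomputable def LRmapT (σ : D ≃ₐ[Z] D) : D ⊗[Z] Dᵐᵒᵖ →ₐ[Z] Module.End Z D :=
  Algebra.TensorProduct.lift ((Algebra.lmul Z D).comp σ.toAlgHom) (rmulAlg Z D)
    (fun x y => lmul_commute_rmul Z D (σ x) y)

lemma lmul_eq_mulLeft (x : D) : (Algebra.lmul Z D) x = mulLeft Z x := by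
  ext w; rfl

lemma LRmap_tmul (x : D) (y : Dᵐᵒᵖ) :
    LRmap Z D (x ⊗ₜ[Z] y) = mulLeft Z x * mulRight Z y.unop := by
  rw [LRmap, Algebra.TensorProduct.lift_tmul, lmul_eq_mulLeft, rmulAlg_apply]

lemma LRmapT_tmul (σ : D ≃ₐ[Z] D) (x : D) (y : Dᵐᵒᵖ) :
    LRmapT Z D σ (x ⊗ₜ[Z] y) = mulLeft Z (σ x) * mulRight Z y.unop := by
  erw [LRmapT, Algebra.TensorProduct.lift_tmul]
  rfl

variable [FiniteDimensional Z D]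

lemma tensor_decomp {ι : Type*} [Fintype ι] (b : Basis ι Z D) (t : D ⊗[Z] Dᵐᵒᵖ) :
    ∃ d : ι → D, t = ∑ i, d i ⊗ₜ[Z] (MulOpposite.op (b i)) := by
  set bop : Basis ι Z Dᵐᵒᵖ := b.map (MulOpposite.opLinearEquiv Z) with hbop
  set BB : Basis ι D (D ⊗[Z] Dᵐᵒᵖ) := Algebra.TensorProduct.basis D bop with hBB
  refine ⟨fun i => BB.repr t i, ?_⟩
  have h : t = ∑ i, (BB.repr t) i • BB i := (BB.sum_repr t).symm
  conv_lhs => rw [h]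
  refine Finset.sum_congr rfl fun i _ => ?_
  have h1 : BB i = (1 : D) ⊗ₜ[Z] (bop i) := Algebra.TensorProduct.basis_apply bop i
  have h2 : bop i = MulOpposite.op (b i) := by simp [hbop]
  rw [h1, h2, TensorProduct.smul_tmul', smul_eq_mul, mul_one]
end tensor

section main
variable {Z D : Type*} [Field Z] [DivisionRing D] [Algebra Z D] [FiniteDimensional Z D]
variable (hcentral : ∀ d : D, (∀ x : D, x * d = d * x) → ∃ z : Z, algebraMap Z D z = d)

lemma basis_indep {ι : Type*} [Fintype ι] (b : Basis ι Z D) :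
    ∀ f : ι → Z, ∑ i ∈ Finset.univ, f i • b i = 0 → ∀ i ∈ (Finset.univ : Finset ι), f i = 0 := by
  intro f hf i _
  exact Fintype.linearIndependent_iff.mp b.linearIndependent f hf i

include hcentral in
lemma LR_zero {ι : Type*} [Fintype ι] [DecidableEq ι] (b : Basis ι Z D) (d : ι → D)
    (h : ∑ i, (mulLeft Z (d i) * mulRight Z (b i)) = 0) : ∀ i, d i = 0 := fun i =>
  rel_indep hcentral (Finset.univ.card) Finset.univ rfl d b (basis_indep b) h i
    (Finset.mem_univ i)

include hcentral in
lemma LRmap_bijective : Function.Bijective (LRmap Z D) := by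
  classical
  set b := Module.finBasis Z D with hb
  have hinj : Function.Injective (LRmap Z D) := by
    rw [injective_iff_map_eq_zero]
    intro t ht
    obtain ⟨d, rfl⟩ := tensor_decomp Z D b t
    have h0 : ∑ i, (mulLeft Z (d i) * mulRight Z (b i)) = 0 := by
      rw [← ht, map_sum]
      exact Finset.sum_congr rfl fun i _ => (LRmap_tmul Z D _ _).symm
    have hz := LR_zero hcentral b d h0
    refine Finset.sum_eq_zero fun i _ => ?_
    rw [hz i, TensorProduct.zero_tmul]
  have hrank : finrank Z (D ⊗[Z] Dᵐᵒᵖ) = finrank Z (Module.End Z D) := by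
    rw [finrank_tensorProduct, finrank_linearMap,
      (MulOpposite.opLinearEquiv Z : D ≃ₗ[Z] Dᵐᵒᵖ).finrank_eq.symm]
  exact ⟨hinj, (LinearMap.injective_iff_surjective_of_finrank_eq_finrank hrank).mp hinj⟩

include hcentral in
lemma LRmapT_bijective (σ : D ≃ₐ[Z] D) : Function.Bijective (LRmapT Z D σ) := by
  classical
  set b := Module.finBasis Z D with hb
  have hinj : Function.Injective (LRmapT Z D σ) := by
    rw [injective_iff_map_eq_zero]
    intro t ht
    obtain ⟨d, rfl⟩ := tensor_decomp Z D b t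
    have h0 : ∑ i, (mulLeft Z (σ (d i)) * mulRight Z (b i)) = 0 := by
      rw [← ht, map_sum]
      exact Finset.sum_congr rfl fun i _ => (LRmapT_tmul Z D σ _ _).symm
    have hz := LR_zero hcentral b (fun i => σ (d i)) h0
    refine Finset.sum_eq_zero fun i _ => ?_
    have : d i = 0 := by
      have := hz i
      simpa using σ.injective (by simpa using this)
    rw [this, TensorProduct.zero_tmul]
  have hrank : finrank Z (D ⊗[Z] Dᵐᵒᵖ) = finrank Z (Module.End Z D) := by
    rw [finrank_tensorProduct, finrank_linearMap,
      (MulOpposite.opLinearEquiv Z : D ≃ₗ[Z] Dᵐᵒᵖ).finrank_eq.symm]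
  exact ⟨hinj, (LinearMap.injective_iff_surjective_of_finrank_eq_finrank hrank).mp hinj⟩

include hcentral in
/-- Skolem-Noether style trace invariance. -/
theorem trace_conj_sigma (σ : D ≃ₐ[Z] D) (x c : D) :
    trace Z D (mulLeft Z (σ x) * mulRight Z c) = trace Z D (mulLeft Z x * mulRight Z c) := by
  set e1 := AlgEquiv.ofBijective (LRmap Z D) (LRmap_bijective hcentral) with he1
  set e2 := AlgEquiv.ofBijective (LRmapT Z D σ) (LRmapT_bijective hcentral σ) with he2
  set Θ := e1.symm.trans e2 with hΘ
  have hΘval : ∀ t : D ⊗[Z] Dᵐᵒᵖ, Θ (LRmap Z D t) = LRmapT Z D σ t := by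
    intro t
    have h1 : e1.symm (LRmap Z D t) = t := by
      have : LRmap Z D t = e1 t := rfl
      rw [this, AlgEquiv.symm_apply_apply]
    show e2 (e1.symm (LRmap Z D t)) = LRmapT Z D σ t
    rw [h1]; rfl
  obtain ⟨T, hT⟩ := algEquiv_end_exists_conj Θ
  have key : mulLeft Z (σ x) * mulRight Z c
      = (T : D →ₗ[Z] D) ∘ₗ (mulLeft Z x * mulRight Z c) ∘ₗ (T.symm : D →ₗ[Z] D) := by
    rw [← hT]
    have h2 := hΘval (x ⊗ₜ[Z] (MulOpposite.op c))
    rw [LRmap_tmul, LRmapT_tmul] at h2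
    simpa using h2.symm
  rw [key]
  have : (T : D →ₗ[Z] D) ∘ₗ (mulLeft Z x * mulRight Z c) ∘ₗ (T.symm : D →ₗ[Z] D)
      = T.conj (mulLeft Z x * mulRight Z c) := by
    rw [LinearEquiv.conj_apply]; rfl
  rw [this, LinearMap.trace_conj']

include hcentral in
theorem exists_trace_ne_zero [Nontrivial D] :
    ∃ x c : D, trace Z D (mulLeft Z x * mulRight Z c) ≠ 0 := by
  classical
  set b := Module.finBasis Z D with hb
  have hn : 0 < finrank Z D := finrank_pos
  set i₀ : Fin (finrank Z D) := ⟨0, hn⟩ with hi₀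
  set e : Module.End Z D := (b.coord i₀).smulRight (b i₀) with he
  have htr : trace Z D e = 1 := by
    rw [trace_eq_matrix_trace Z b]
    have hmat : (toMatrix b b) e = Matrix.single i₀ i₀ 1 := by
      ext i j
      rw [LinearMap.toMatrix_apply]
      show (b.repr ((b.coord i₀) (b j) • b i₀)) i = _
      rw [map_smul]
      simp [Basis.coord_apply, Basis.repr_self, Finsupp.single_apply,
        Matrix.single, smul_eq_mul]
      aesop
    rw [hmat, Matrix.trace_single_eq_same]
  obtain ⟨p, hp⟩ := (LRmap_bijective hcentral).2 e
  obtain ⟨d, rfl⟩ := tensor_decomp Z D b p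
  by_contra hcon
  push_neg at hcon
  have : trace Z D e = 0 := by
    rw [← hp, map_sum, map_sum]
    refine Finset.sum_eq_zero fun i _ => ?_
    rw [LRmap_tmul]
    exact hcon (d i) (b i)
  rw [htr] at this
  exact one_ne_zero this
end main

end Aux


/-- A left ideal of a `G`-graded algebra is graded if it is generated by its
homogeneous elements. -/
def IsGradedLeftIdeal {k A G : Type*} [Field k] [Ring A] [Algebra k A]
    (𝒜 : G → Submodule k A) (I : Submodule A A) : Prop :=
  I = Submodule.span A ((I : Set A) ∩ ⋃ g, (𝒜 g : Set A))

/-- A `G`-graded algebra is graded symmetric if it admits a symmetric linear functional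
vanishing on all homogeneous components of degree ≠ e, whose kernel contains no
nonzero graded left ideal. -/
def IsGradedSymmetric {k A G : Type*} [Field k] [Ring A] [Algebra k A] [Group G]
    (𝒜 : G → Submodule k A) : Prop :=
  ∃ lam : A →ₗ[k] k,
    (∀ a b : A, lam (a * b) = lam (b * a)) ∧
    (∀ g : G, g ≠ 1 → ∀ a ∈ 𝒜 g, lam a = 0) ∧
    ∀ I : Submodule A A, IsGradedLeftIdeal 𝒜 I → (∀ x ∈ I, lam x = 0) → I = ⊥

/-- A `G`-graded division algebra: a `G`-grading of `A` in which every nonzero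
homogeneous element is invertible. -/
structure IsGradedDivisionAlgebra {k A G : Type*} [Field k] [Ring A] [Algebra k A]
    [Group G] [DecidableEq G] (𝒜 : G → Submodule k A) : Prop where
  mul_mem : ∀ {g h : G} {a b : A}, a ∈ 𝒜 g → b ∈ 𝒜 h → a * b ∈ 𝒜 (g * h)
  one_mem : (1 : A) ∈ 𝒜 1
  internal : DirectSum.IsInternal 𝒜
  isUnit_of_ne_zero : ∀ g : G, ∀ a ∈ 𝒜 g, a ≠ 0 → IsUnit a
set_option maxHeartbeats 2000000 in
set_option synthInstance.maxHeartbeats 200000 in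
/-- Theorem 2.8: a finite dimensional -graded division algebra with
 is graded symmetric. -/
theorem gradedDivisionAlgebra_isGradedSymmetric_of_center_eq {k A G : Type*} [Field k]
    [Ring A] [Algebra k A] [Group G] [DecidableEq G] [Finite G] [FiniteDimensional k A]
    (𝒜 : G → Submodule k A) (hA : IsGradedDivisionAlgebra 𝒜)
    (hcen : {c : A | c ∈ 𝒜 1 ∧ ∀ d ∈ 𝒜 1, c * d = d * c} =
      {c : A | c ∈ 𝒜 1 ∧ ∀ d : A, c * d = d * c}) :
    IsGradedSymmetric 𝒜 := by
  classical
  rcases subsingleton_or_nontrivial A with hA0 | hA1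
  · refine ⟨0, by simp, by simp, fun I _ _ => ?_⟩
    rw [Submodule.eq_bot_iff]
    intro x _
    exact Subsingleton.elim x 0
  letI : Fintype G := Fintype.ofFinite G
  letI decomp : DirectSum.Decomposition 𝒜 := hA.internal.chooseDecomposition
  -- sum of homogeneous components
  have hsum : ∀ x : A, ∑ g : G, ((DirectSum.decompose 𝒜 x) g : A) = x := by
    intro x
    have h0 := DirectSum.sum_support_decompose 𝒜 x
    conv_rhs => rw [← h0]
    refine (Finset.sum_subset (Finset.subset_univ _) fun g _ hg => ?_).symm
    rw [DFinsupp.notMem_support_iff.mp hg]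
    rfl
  -- projections are linear
  have hproj_sum : ∀ (s : Finset G) (f : G → A) (g : G),
      ((DirectSum.decompose 𝒜 (∑ x ∈ s, f x)) g : A)
        = ∑ x ∈ s, ((DirectSum.decompose 𝒜 (f x)) g : A) := by
    intro s f g
    have h1 : (DirectSum.decompose 𝒜 (∑ x ∈ s, f x)) g = ∑ x ∈ s, (DirectSum.decompose 𝒜 (f x)) g := by
      rw [DirectSum.decompose_sum, DFinsupp.finset_sum_apply]
    rw [h1, AddSubmonoidClass.coe_finset_sum]
  -- inverses of homogeneous units are homogeneous
  have hinv : ∀ (g : G) (a : A), a ∈ 𝒜 g → ∀ u : Aˣ, (u : A) = a → (↑u⁻¹ : A) ∈ 𝒜 g⁻¹ := by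
    intro g a ha u hu
    have hy : ∀ h : G, h ≠ g⁻¹ → ((DirectSum.decompose 𝒜 (↑u⁻¹ : A)) h : A) = 0 := by
      intro h hne
      have h1 : (1 : A) = ∑ h' : G, ((DirectSum.decompose 𝒜 (↑u⁻¹ : A)) h' : A) * a := by
        rw [← Finset.sum_mul, hsum (↑u⁻¹ : A), ← hu, Units.inv_mul]
      have hmem : ∀ h' : G, ((DirectSum.decompose 𝒜 (↑u⁻¹ : A)) h' : A) * a ∈ 𝒜 (h' * g) :=
        fun h' => hA.mul_mem (SetLike.coe_mem _) ha
      have hg1 : (1 : G) ≠ h * g := by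
        intro hcon
        exact hne (by rw [eq_inv_iff_mul_eq_one, ← hcon])
      have h2 : ((DirectSum.decompose 𝒜 (1 : A)) (h * g) : A) = 0 :=
        DirectSum.decompose_of_mem_ne 𝒜 hA.one_mem hg1
      have h3 : ((DirectSum.decompose 𝒜 (1 : A)) (h * g) : A)
          = ((DirectSum.decompose 𝒜 (↑u⁻¹ : A)) h : A) * a := by
        conv_lhs => rw [h1]
        rw [hproj_sum]
        rw [Finset.sum_eq_single h]
        · exact DirectSum.decompose_of_mem_same 𝒜 (hmem h)
        · intro h' _ hne'
          exact DirectSum.decompose_of_mem_ne 𝒜 (hmem h') (by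
            intro hcon
            exact hne' (mul_right_cancel hcon))
        · intro hcon
          exact absurd (Finset.mem_univ h) hcon
      have h4 : ((DirectSum.decompose 𝒜 (↑u⁻¹ : A)) h : A) * a = 0 := by rw [← h3, h2]
      calc ((DirectSum.decompose 𝒜 (↑u⁻¹ : A)) h : A)
          = ((DirectSum.decompose 𝒜 (↑u⁻¹ : A)) h : A) * (a * ↑u⁻¹) := by
            rw [← hu, Units.mul_inv, mul_one]
        _ = 0 := by rw [← mul_assoc, h4, zero_mul]
    have : (↑u⁻¹ : A) = ∑ h : G, ((DirectSum.decompose 𝒜 (↑u⁻¹ : A)) h : A) := (hsum _).symm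
    rw [this]
    refine Submodule.sum_mem _ fun h _ => ?_
    by_cases hcase : h = g⁻¹
    · subst hcase; exact SetLike.coe_mem _
    · rw [hy h hcase]; exact Submodule.zero_mem _
  -- the identity component as a subalgebra
  set D1 : Subalgebra k A := (𝒜 1).toSubalgebra hA.one_mem
    (fun x y hx hy => by simpa using hA.mul_mem hx hy) with hD1
  have hD1mem : ∀ x : A, x ∈ D1 ↔ x ∈ 𝒜 1 := fun x => Submodule.mem_toSubalgebra
  haveI hD1nt : Nontrivial D1 := ⟨⟨1, 0, fun hcon => one_ne_zero (congrArg Subtype.val hcon)⟩⟩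
  letI : NoZeroDivisors D1 := ⟨by
    intro x y hxy
    by_cases hx : x = 0
    · exact Or.inl hx
    · refine Or.inr ?_
      have hx' : (x : A) ≠ 0 := fun h => hx (Subtype.ext h)
      obtain ⟨u, hu⟩ := hA.isUnit_of_ne_zero 1 (x : A) ((hD1mem _).mp x.2) hx'
      have h0 : (x : A) * (y : A) = 0 := congrArg Subtype.val hxy
      have h1 : (y : A) = ↑u⁻¹ * ((x : A) * (y : A)) := by
        rw [← mul_assoc, ← hu, Units.inv_mul, one_mul]
      rw [h0, mul_zero] at h1
      exact Subtype.ext h1⟩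
  letI : IsDomain D1 := NoZeroDivisors.to_isDomain _
  letI : DivisionRing D1 := divisionRingOfFiniteDimensional k D1
  set Zc : Subalgebra k D1 := Subalgebra.center k D1 with hZc
  letI : Algebra Zc D1 := RingHom.toAlgebra' (Zc.val.toRingHom)
    (fun c x => (Subalgebra.mem_center_iff.mp c.2 x).symm)
  have halgmap : ∀ z : Zc, algebraMap Zc D1 z = (z : D1) := fun z => rfl
  haveI : IsScalarTower k Zc D1 := ⟨by
    intro r z d
    show ((r • z : Zc) : D1) * d = r • (((z : Zc) : D1) * d)
    have hcoe : ((r • z : Zc) : D1) = r • ((z : Zc) : D1) := rfl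
    rw [hcoe, smul_mul_assoc]⟩
  letI : CommRing Zc :=
    { (inferInstance : Ring Zc) with
      mul_comm := fun x y => Subtype.ext (Subalgebra.mem_center_iff.mp y.2 x.1) }
  haveI : Nontrivial Zc := ⟨⟨1, 0, fun hcon => one_ne_zero (congrArg Subtype.val hcon)⟩⟩
  letI : NoZeroDivisors Zc := ⟨by
    intro x y hxy
    have h0 : (x : D1) * (y : D1) = 0 := congrArg Subtype.val hxy
    rcases mul_eq_zero.mp h0 with h | h
    · exact Or.inl (Subtype.ext h)
    · exact Or.inr (Subtype.ext h)⟩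
  letI : IsDomain Zc := NoZeroDivisors.to_isDomain _
  haveI : FiniteDimensional k Zc :=
    FiniteDimensional.of_injective (Zc.val.toLinearMap) Subtype.val_injective
  letI : Field Zc := fieldOfFiniteDimensional k Zc
  haveI hFD : FiniteDimensional Zc D1 := FiniteDimensional.right k Zc D1
  haveI : SMulCommClass Zc D1 D1 := Algebra.to_smulCommClass
  have hcentralD : ∀ d : D1, (∀ x : D1, x * d = d * x) → ∃ z : Zc, algebraMap Zc D1 z = d :=
    fun d hd => ⟨⟨d, Subalgebra.mem_center_iff.mpr hd⟩, rfl⟩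
  obtain ⟨x₀, c₀, hxc⟩ := @exists_trace_ne_zero Zc D1 _ _ _ hFD hcentralD _
  obtain ⟨θ, hθ⟩ := exists_functional (Z := k) (V := Zc) hxc
  -- the symmetric functional
  set Bmap : D1 →ₗ[Zc] Zc :=
    { toFun := fun x => trace Zc D1 (mulLeft Zc x * mulRight Zc c₀)
      map_add' := by
        intro x y
        have e : mulLeft Zc (x + y) * mulRight Zc c₀
            = mulLeft Zc x * mulRight Zc c₀ + mulLeft Zc y * mulRight Zc c₀ :=
          LinearMap.ext fun w => by
            show (x + y) * (w * c₀) = x * (w * c₀) + y * (w * c₀)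
            rw [add_mul]
        rw [e, map_add]
      map_smul' := by
        intro z x
        have e : mulLeft Zc (z • x) * mulRight Zc c₀
            = z • (mulLeft Zc x * mulRight Zc c₀) :=
          LinearMap.ext fun w => by
            show (z • x) * (w * c₀) = z • (x * (w * c₀))
            rw [smul_mul_assoc]
        rw [e, map_smul]
        rfl } with hBmap
  set e01 : (𝒜 1) →ₗ[k] D1 :=
    { toFun := fun x => ⟨x.1, (hD1mem _).mpr x.2⟩
      map_add' := fun _ _ => rfl
      map_smul' := fun _ _ => rfl } with he01
  set π1 : A →ₗ[k] (𝒜 1) :=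
    (DFinsupp.lapply (1 : G)) ∘ₗ (DirectSum.decomposeLinearEquiv 𝒜).toLinearMap with hπ1
  set lam : A →ₗ[k] k := θ ∘ₗ (Bmap.restrictScalars k) ∘ₗ e01 ∘ₗ π1 with hlam_def
  have hπ1val : ∀ x : A, ((π1 x : A)) = ((DirectSum.decompose 𝒜 x) 1 : A) := fun x => rfl
  have hlam_val : ∀ x : A,
      lam x = θ (trace Zc D1 (mulLeft Zc (e01 (π1 x)) * mulRight Zc c₀)) := fun x => rfl
  have hcomp : ∀ (x : A) (hx : x ∈ 𝒜 1), e01 (π1 x) = ⟨x, (hD1mem _).mpr hx⟩ := by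
    intro x hx
    apply Subtype.ext
    show ((DirectSum.decompose 𝒜 x) 1 : A) = x
    exact DirectSum.decompose_of_mem_same 𝒜 hx
  have hlam_hom : ∀ (x : A) (hx : x ∈ 𝒜 1),
      lam x = θ (trace Zc D1 (mulLeft Zc ⟨x, (hD1mem _).mpr hx⟩ * mulRight Zc c₀)) := by
    intro x hx
    rw [hlam_val, hcomp x hx]
  have hlam_ne : ∀ g : G, g ≠ 1 → ∀ x ∈ 𝒜 g, lam x = 0 := by
    intro g hg x hx
    have hz : π1 x = 0 := by
      apply Subtype.ext
      show ((DirectSum.decompose 𝒜 x) 1 : A) = 0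
      exact DirectSum.decompose_of_mem_ne 𝒜 hx hg
    rw [hlam_val, hz, map_zero]
    show θ (trace Zc D1 (mulLeft Zc 0 * mulRight Zc c₀)) = 0
    have e : mulLeft Zc (0 : D1) * mulRight Zc c₀ = 0 :=
      LinearMap.ext fun w => by
        show (0 : D1) * (w * c₀) = 0
        rw [zero_mul]
    rw [e, map_zero, map_zero]
  -- the main case of symmetry
  have main_case : ∀ (g : G) (a b : A), a ∈ 𝒜 g → b ∈ 𝒜 g⁻¹ → lam (a * b) = lam (b * a) := by
    intro g a b ha hb
    by_cases ha0 : a = 0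
    · rw [ha0, zero_mul, mul_zero]
    obtain ⟨u, hu⟩ := hA.isUnit_of_ne_zero g a ha ha0
    have hab : a * b ∈ 𝒜 1 := by
      have := hA.mul_mem ha hb; rwa [mul_inv_cancel] at this
    have hba : b * a ∈ 𝒜 1 := by
      have := hA.mul_mem hb ha; rwa [inv_mul_cancel] at this
    have hinv_mem : (↑u⁻¹ : A) ∈ 𝒜 g⁻¹ := hinv g a ha u hu
    have hσ_mem : ∀ d : A, d ∈ 𝒜 1 → ↑u⁻¹ * d * a ∈ 𝒜 1 := fun d hd => by
      have := hA.mul_mem (hA.mul_mem hinv_mem hd) ha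
      rwa [mul_one, inv_mul_cancel] at this
    have hσ_mem' : ∀ d : A, d ∈ 𝒜 1 → a * d * ↑u⁻¹ ∈ 𝒜 1 := fun d hd => by
      have := hA.mul_mem (hA.mul_mem ha hd) hinv_mem
      rwa [mul_one, mul_inv_cancel] at this
    -- conjugation by u as an algebra automorphism of D1 over Zc
    set σ : D1 ≃ₐ[Zc] D1 :=
      { toFun := fun d => ⟨↑u⁻¹ * ↑d * a, (hD1mem _).mpr (hσ_mem _ ((hD1mem _).mp d.2))⟩
        invFun := fun d => ⟨a * ↑d * ↑u⁻¹, (hD1mem _).mpr (hσ_mem' _ ((hD1mem _).mp d.2))⟩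
        left_inv := fun d => Subtype.ext (by
          show a * (↑u⁻¹ * ↑d * a) * ↑u⁻¹ = ↑d
          rw [← hu]
          simp [mul_assoc])
        right_inv := fun d => Subtype.ext (by
          show ↑u⁻¹ * (a * ↑d * ↑u⁻¹) * a = ↑d
          rw [← hu]
          simp [mul_assoc])
        map_mul' := fun d e => Subtype.ext (by
          show ↑u⁻¹ * (↑d * ↑e) * a = (↑u⁻¹ * ↑d * a) * (↑u⁻¹ * ↑e * a)
          rw [← hu]
          simp [mul_assoc])
        map_add' := fun d e => Subtype.ext (by
          show ↑u⁻¹ * (↑d + ↑e) * a = (↑u⁻¹ * ↑d * a) + (↑u⁻¹ * ↑e * a)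
          rw [mul_add, add_mul])
        commutes' := fun z => Subtype.ext (by
          show ↑u⁻¹ * ((z : D1) : A) * a = ((z : D1) : A)
          have hzc : ∀ w : A, ((z : D1) : A) * w = w * ((z : D1) : A) := by
            have hmem1 : ((z : D1) : A) ∈ 𝒜 1 := (hD1mem _).mp (z : D1).2
            have hcomm1 : ∀ d ∈ 𝒜 1, ((z : D1) : A) * d = d * ((z : D1) : A) := fun d hd =>
              congrArg Subtype.val
                (Subalgebra.mem_center_iff.mp z.2 ⟨d, (hD1mem _).mpr hd⟩).symm
            have hmemset : ((z : D1) : A) ∈ {c : A | c ∈ 𝒜 1 ∧ ∀ d ∈ 𝒜 1, c * d = d * c} :=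
              ⟨hmem1, hcomm1⟩
            rw [hcen] at hmemset
            exact hmemset.2
          rw [mul_assoc, hzc a, ← mul_assoc, ← hu, Units.inv_mul, one_mul]) } with hσ
    have hσab : σ ⟨a * b, (hD1mem _).mpr hab⟩ = ⟨b * a, (hD1mem _).mpr hba⟩ := by
      apply Subtype.ext
      show ↑u⁻¹ * (a * b) * a = b * a
      rw [← hu, Units.inv_mul_cancel_left]
    rw [hlam_hom (a * b) hab, hlam_hom (b * a) hba, ← hσab]
    exact (congrArg θ (@trace_conj_sigma Zc D1 _ _ _ hFD hcentralD σ _ c₀)).symm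
  -- full symmetry
  have hsymm : ∀ a b : A, lam (a * b) = lam (b * a) := by
    have expand : ∀ x y : A, lam (x * y) = ∑ g : G, ∑ h : G,
        lam (((DirectSum.decompose 𝒜 x) g : A) * ((DirectSum.decompose 𝒜 y) h : A)) := by
      intro x y
      conv_lhs => rw [← hsum x, ← hsum y, Finset.sum_mul]
      rw [map_sum]
      refine Finset.sum_congr rfl fun g _ => ?_
      rw [Finset.mul_sum, map_sum]
    intro a b
    rw [expand a b, expand b a]
    conv_rhs => rw [Finset.sum_comm]
    refine Finset.sum_congr rfl fun g _ => Finset.sum_congr rfl fun h _ => ?_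
    by_cases hcase : h = g⁻¹
    · subst hcase
      exact main_case g _ _ (SetLike.coe_mem _) (SetLike.coe_mem _)
    · have h1 : g * h ≠ 1 := fun hc => hcase (mul_eq_one_iff_inv_eq.mp hc).symm
      have h2 : h * g ≠ 1 := fun hc => hcase (mul_eq_one_iff_eq_inv.mp hc)
      rw [hlam_ne (g * h) h1 _ (hA.mul_mem (SetLike.coe_mem _) (SetLike.coe_mem _)),
        hlam_ne (h * g) h2 _ (hA.mul_mem (SetLike.coe_mem _) (SetLike.coe_mem _))]
  -- the nonvanishing witness
  have hwitness : lam ((x₀ : D1) : A) ≠ 0 := by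
    have hx₀mem : ((x₀ : D1) : A) ∈ 𝒜 1 := (hD1mem _).mp x₀.2
    rw [hlam_hom _ hx₀mem]
    have : (⟨((x₀ : D1) : A), (hD1mem _).mpr hx₀mem⟩ : D1) = x₀ := Subtype.ext rfl
    rw [this]
    exact fun h => one_ne_zero (hθ.symm.trans h)
  refine ⟨lam, hsymm, hlam_ne, ?_⟩
  intro I hI hvan
  by_contra hne
  have hSne : ¬ ((I : Set A) ∩ ⋃ g, ((𝒜 g : Set A))) ⊆ {0} := by
    intro hsub
    apply hne
    rw [hI]
    have : ((I : Set A) ∩ ⋃ g, ((𝒜 g : Set A))) ⊆ ((⊥ : Submodule A A) : Set A) := by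
      intro v hv
      have := hsub hv
      simpa using this
    rw [← le_bot_iff]
    exact Submodule.span_le.mpr this
  obtain ⟨v, hvS, hv0⟩ := Set.not_subset.mp hSne
  obtain ⟨hvI, hvhom⟩ := hvS
  obtain ⟨g, hvg⟩ := Set.mem_iUnion.mp hvhom
  have hvg' : v ∈ 𝒜 g := hvg
  have hv0' : v ≠ 0 := fun h => hv0 (by rw [h]; rfl)
  obtain ⟨u, hu⟩ := hA.isUnit_of_ne_zero g v hvg' hv0'
  have h1 : (1 : A) ∈ I := by
    have := I.smul_mem (↑u⁻¹ : A) hvI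
    rwa [smul_eq_mul, ← hu, Units.inv_mul] at this
  have hx : ((x₀ : D1) : A) ∈ I := by
    have := I.smul_mem ((x₀ : D1) : A) h1
    rwa [smul_eq_mul, mul_one] at this
  exact hwitness (hvan _ hx)
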